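/- For any n ≥ 2 and m divisible by 4, the graph G_{n,m} is vertex transitive. Explicitly: for any vertices i(a,b) and j(c,d), the map φ defined by φ(k(u,v)) = ((k+j−i) mod m)((u+c−a) mod n, (v+d−b) mod n) when j−i is even, and φ(k(u,v)) = ((k+j−i) mod m)((v+c−b) mod n, (u+d−a) mod n) when j−i is odd, is a graph automorphism sending i(a,b) to j(c,d). -/

import Mathlib

/-- Adjacency relation of the graph `G_{n,m}`: vertex `i(a,b)` is written `(i, a, b)` with
`i : ZMod m` the cluster and `a b : ZMod n` the coordinates.  Edges:
(1) short edges between consecutive clusters (any coordinates);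
(2) `i(a,b) ~ (i+m/4)(a,d)`, `b ≠ d`, for `i` even;
(3) `i(a,b) ~ (i-m/4)(c,b)`, `a ≠ c`, for `i` even;
(4) `i(a,b) ~ (i+m/4)(c,b)`, `a ≠ c`, for `i` odd;
(5) `i(a,b) ~ (i-m/4)(a,d)`, `b ≠ d`, for `i` odd. -/
def Gadj (n m : ℕ) (v w : ZMod m × ZMod n × ZMod n) : Prop :=
  (w.1 = v.1 + 1 ∨ w.1 = v.1 - 1) ∨
    (Even v.1.val ∧ w.1 = v.1 + (m / 4 : ℕ) ∧ w.2.1 = v.2.1 ∧ w.2.2 ≠ v.2.2) ∨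
      (Even v.1.val ∧ w.1 = v.1 - (m / 4 : ℕ) ∧ w.2.2 = v.2.2 ∧ w.2.1 ≠ v.2.1) ∨
        (Odd v.1.val ∧ w.1 = v.1 + (m / 4 : ℕ) ∧ w.2.2 = v.2.2 ∧ w.2.1 ≠ v.2.1) ∨
          (Odd v.1.val ∧ w.1 = v.1 - (m / 4 : ℕ) ∧ w.2.1 = v.2.1 ∧ w.2.2 ≠ v.2.2)

lemma val_add_even {m : ℕ} [NeZero m] (hm : 2 ∣ m) (x y : ZMod m) :
    Even ((x + y).val) ↔ (Even x.val ↔ Even y.val) := by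
  rw [ZMod.val_add, Nat.even_iff, Nat.mod_mod_of_dvd _ hm, ← Nat.even_iff, Nat.even_add]

lemma aux1 {G : Type*} [AddCommGroup G] (x y s t : G) :
    x + t = y + t + s ↔ x = y + s := by
  rw [add_right_comm, add_left_inj]

lemma aux2 {G : Type*} [AddCommGroup G] (x y s t : G) :
    x + t = y + (t - s) ↔ x = y - s := by
  rw [show y + (t - s) = y - s + t by abel, add_left_inj]

set_option maxHeartbeats 1000000 in
/-- The graph `G_{n,m}` is vertex transitive: the explicit map `φ` is a graph
automorphism sending `i(a,b)` to `j(c,d)`. -/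
theorem stmt12 (n m : ℕ) (hn : 2 ≤ n) (hm : 0 < m) (hm4 : m % 4 = 0)
    (i j : ZMod m) (a b c d : ZMod n) :
    let φ : ZMod m × ZMod n × ZMod n → ZMod m × ZMod n × ZMod n := fun v =>
      if Even ((j - i).val) then
        (v.1 + j - i, (v.2.1 + c - a, v.2.2 + d - b))
      else
        (v.1 + j - i, (v.2.2 + c - b, v.2.1 + d - a))
    Function.Bijective φ ∧ (∀ v w, Gadj n m v w ↔ Gadj n m (φ v) (φ w)) ∧
      φ (i, (a, b)) = (j, (c, d)) := by
  intro φ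
  haveI : NeZero m := ⟨hm.ne'⟩
  have h2 : 2 ∣ m := dvd_trans (by norm_num) (Nat.dvd_of_mod_eq_zero hm4)
  by_cases ht : Even ((j - i).val)
  · refine ⟨?_, ?_, ?_⟩
    · refine Function.bijective_iff_has_inverse.mpr
        ⟨fun v => (v.1 - j + i, (v.2.1 - c + a, v.2.2 - d + b)), ?_, ?_⟩ <;>
        intro v <;> simp only [φ, if_pos ht, if_true, Prod.ext_iff] <;>
        refine ⟨by ring, by ring, by ring⟩
    · intro v w
      have hpar : ∀ x : ZMod m, Even ((x + (j - i)).val) ↔ Even x.val := fun x => by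
        rw [val_add_even h2, iff_true_intro ht, iff_true]
      simp only [φ, if_pos ht, if_true, Gadj, add_sub_assoc, aux1, aux2, add_left_inj, ne_eq,
        hpar, ← Nat.not_even_iff_odd]
    · simp only [φ, if_pos ht, if_true, Prod.ext_iff]
      refine ⟨by ring, by ring, by ring⟩
  · refine ⟨?_, ?_, ?_⟩
    · refine Function.bijective_iff_has_inverse.mpr
        ⟨fun v => (v.1 - j + i, (v.2.2 - d + a, v.2.1 - c + b)), ?_, ?_⟩ <;>
        intro v <;> simp only [φ, if_neg ht, if_false, Prod.ext_iff] <;>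
        refine ⟨by ring, by ring, by ring⟩
    · intro v w
      have hpar : ∀ x : ZMod m, Even ((x + (j - i)).val) ↔ ¬ Even x.val := fun x => by
        rw [val_add_even h2, iff_false_intro ht, iff_false]
      simp only [φ, if_neg ht, if_false, Gadj, add_sub_assoc, aux1, aux2, add_left_inj, ne_eq,
        hpar, ← Nat.not_even_iff_odd, not_not]
      tauto
    · simp only [φ, if_neg ht, if_false, Prod.ext_iff]
      refine ⟨by ring, by ring, by ring⟩
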